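/- arXiv:1902.02871 — 2 statements merged into one kernel-verified Lean document; each statement's English description precedes it below -/
import Mathlib

section
/- Suppose w(l,s) ≥ 0 for all arguments. Then along the Kantowski-Sachs flow, H_D' < 0 at every point of the state space with H_D ∈ (-1,1), Σ₊ ∈ (-1,1). In particular H_D is strictly monotonically decreasing along orbits in the interior of the state space. -/
/-- If the isotropic pressure w(l,s) is nonnegative, then H_D' < 0 at every point of the
state space with H_D ∈ (-1,1), Σ₊ ∈ (-1,1); hence H_D is strictly decreasing along orbits. -/
theorem stmt_3 (w : ℝ → ℝ → ℝ) (hw : ∀ l s, 0 ≤ w l s)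
    (H Sp M l : ℝ) (hH : H ∈ Set.Ioo (-1 : ℝ) 1) (hS : Sp ∈ Set.Ioo (-1 : ℝ) 1) :
    -(1 - H ^ 2) *
      ((2 * Sp ^ 2 + (1 / 2) * (1 + 3 * w l (1 / (2 + 3 * (1 - H ^ 2) / M ^ 2))) *
        (1 - Sp ^ 2)) - H * Sp) < 0 := by
  obtain ⟨h1, h2⟩ := hH
  obtain ⟨s1, s2⟩ := hS
  have hw' := hw l (1 / (2 + 3 * (1 - H ^ 2) / M ^ 2))
  nlinarith [sq_nonneg (Sp - H), sq_nonneg (Sp + H), sq_nonneg Sp, sq_nonneg H,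
    mul_pos (sub_pos.mpr h2) (sub_pos.mpr (neg_lt_iff_pos_add.mp h1)),
    mul_pos (sub_pos.mpr s2) (sub_pos.mpr (neg_lt_iff_pos_add.mp s1)),
    mul_nonneg (mul_nonneg hw' (sub_pos.mpr s2).le) (sub_pos.mpr (neg_lt_iff_pos_add.mp s1)).le,
    sq_nonneg (3*Sp - H), sq_nonneg (3*Sp + H)]
end

section
/- Any solution of the scalar ODE Σ₊' = -½(1-Σ₊²)(2Σ₊-1) with initial value in (-1, 1) converges to 1/2 as τ → +∞, and converges to -1 (if the initial value is in (-1,1/2)) or to 1 (if in (1/2,1)), or stays at 1/2, as τ → -∞. -/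
open Filter

/-- Solutions of linear ODEs `u' = k u` are `u 0 * exp (∫ k)`. -/
lemma lin_exp (u k : ℝ → ℝ) (hk : Continuous k)
    (hu : ∀ τ, HasDerivAt u (k τ * u τ) τ) (τ : ℝ) :
    u τ = u 0 * Real.exp (∫ s in (0:ℝ)..τ, k s) := by
  set H : ℝ → ℝ := fun t => ∫ s in (0:ℝ)..t, k s with hHdef
  have hH' : ∀ t, HasDerivAt H (k t) t := fun t =>
    (hk.integral_hasStrictDerivAt 0 t).hasDerivAt
  set w : ℝ → ℝ := fun t => u t * Real.exp (-(H t)) with hwdef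
  have hw : ∀ t, HasDerivAt w 0 t := by
    intro t
    have h1 : HasDerivAt (fun s => Real.exp (-(H s)))
        (Real.exp (-(H t)) * (-(k t))) t := ((hH' t).neg).exp
    have := (hu t).mul h1
    exact this.congr_deriv (by ring)
  have hconst : ∀ t, w t = w 0 := fun t =>
    is_const_of_deriv_eq_zero (fun s => (hw s).differentiableAt)
      (fun s => (hw s).deriv) t 0
  have hH0 : H 0 = 0 := intervalIntegral.integral_same
  have h := hconst τ
  simp only [hwdef, hH0, neg_zero, Real.exp_zero, mul_one] at h
  have hpos := Real.exp_pos (H τ)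
  rw [Real.exp_neg] at h
  show u τ = u 0 * Real.exp (H τ)
  field_simp at h
  linarith

/-- Key convergence lemma: a solution of `x' = f x` trapped in `(a,b)` where `f > 0`
converges to `b` at `+∞` and to `a` at `-∞`. -/
lemma key (f x : ℝ → ℝ) (hf : Continuous f) (a b : ℝ)
    (hx : ∀ τ, HasDerivAt x (f (x τ)) τ)
    (hmem : ∀ τ, x τ ∈ Set.Ioo a b)
    (hpos : ∀ y ∈ Set.Ioo a b, 0 < f y) :
    Tendsto x atTop (nhds b) ∧ Tendsto x atBot (nhds a) := by
  have hdiff : Differentiable ℝ x := fun τ => (hx τ).differentiableAt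
  have hderiv : ∀ τ, deriv x τ = f (x τ) := fun τ => (hx τ).deriv
  have hmono : Monotone x := monotone_of_deriv_nonneg hdiff fun τ => by
    rw [hderiv]; exact (hpos _ (hmem τ)).le
  have hbddA : BddAbove (Set.range x) := ⟨b, by rintro _ ⟨τ, rfl⟩; exact (hmem τ).2.le⟩
  have hbddB : BddBelow (Set.range x) := ⟨a, by rintro _ ⟨τ, rfl⟩; exact (hmem τ).1.le⟩
  constructor
  · have ht : Tendsto x atTop (nhds (⨆ τ, x τ)) := tendsto_atTop_ciSup hmono hbddA
    have hLb : (⨆ τ, x τ) ≤ b := ciSup_le fun τ => (hmem τ).2.le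
    rcases eq_or_lt_of_le hLb with h | h
    · rwa [h] at ht
    exfalso
    set L := ⨆ τ, x τ with hL
    have hxL : ∀ τ, x τ ≤ L := fun τ => le_ciSup hbddA τ
    have hsub : Set.Icc (x 0) L ⊆ Set.Ioo a b := fun y hy =>
      ⟨lt_of_lt_of_le (hmem 0).1 hy.1, lt_of_le_of_lt hy.2 h⟩
    obtain ⟨z, hz, hzmin⟩ := (isCompact_Icc (a := x 0) (b := L)).exists_isMinOn
      ⟨x 0, le_refl _, hxL 0⟩ (hf.continuousOn)
    set m := f z with hm
    have hm0 : 0 < m := hpos z (hsub hz)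
    have hKmem : ∀ τ, 0 ≤ τ → x τ ∈ Set.Icc (x 0) L := fun τ hτ => ⟨hmono hτ, hxL τ⟩
    have hgrow : ∀ τ, 0 ≤ τ → x 0 + m * τ ≤ x τ := by
      intro τ hτ
      have hg : MonotoneOn (fun t => x t - m * t) (Set.Ici (0:ℝ)) := by
        apply monotoneOn_of_deriv_nonneg (convex_Ici 0)
        · exact (hdiff.continuous.sub (continuous_const.mul continuous_id)).continuousOn
        · intro t _
          exact ((hdiff t).sub ((differentiable_id.const_mul m) t)).differentiableWithinAt
        · intro t ht
          rw [interior_Ici] at ht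
          have h2 : HasDerivAt (fun t : ℝ => m * t) (m * 1) t := (hasDerivAt_id t).const_mul m
          have hd : HasDerivAt (fun t : ℝ => x t - m * t) (f (x t) - m) t := by
            exact ((hx t).sub h2).congr_deriv (by ring)
          rw [hd.deriv, sub_nonneg]
          exact hzmin (hKmem t ht.le)
      have := hg (Set.self_mem_Ici) (Set.mem_Ici.2 hτ) hτ
      simp only [mul_zero, sub_zero] at this
      linarith
    set τ0 := max 0 ((L - x 0) / m + 1) with hτ0
    have h1 := hgrow τ0 (le_max_left _ _)
    have h2 : (L - x 0) / m + 1 ≤ τ0 := le_max_right _ _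
    have h3 : m * ((L - x 0) / m + 1) = (L - x 0) + m := by field_simp
    nlinarith [hxL τ0, mul_le_mul_of_nonneg_left h2 hm0.le]
  · have ht : Tendsto x atBot (nhds (⨅ τ, x τ)) := tendsto_atBot_ciInf hmono hbddB
    have hℓa : a ≤ ⨅ τ, x τ := le_ciInf fun τ => (hmem τ).1.le
    rcases eq_or_lt_of_le hℓa with h | h
    · rwa [← h] at ht
    exfalso
    set ℓ := ⨅ τ, x τ with hℓ
    have hxℓ : ∀ τ, ℓ ≤ x τ := fun τ => ciInf_le hbddB τ
    have hsub : Set.Icc ℓ (x 0) ⊆ Set.Ioo a b := fun y hy =>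
      ⟨lt_of_lt_of_le h hy.1, lt_of_le_of_lt hy.2 (hmem 0).2⟩
    obtain ⟨z, hz, hzmin⟩ := (isCompact_Icc (a := ℓ) (b := x 0)).exists_isMinOn
      ⟨x 0, hxℓ 0, le_refl _⟩ (hf.continuousOn)
    set m := f z with hm
    have hm0 : 0 < m := hpos z (hsub hz)
    have hKmem : ∀ τ, τ ≤ 0 → x τ ∈ Set.Icc ℓ (x 0) := fun τ hτ => ⟨hxℓ τ, hmono hτ⟩
    have hdecay : ∀ τ, τ ≤ 0 → x τ ≤ x 0 + m * τ := by
      intro τ hτ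
      have hg : MonotoneOn (fun t => x t - m * t) (Set.Iic (0:ℝ)) := by
        apply monotoneOn_of_deriv_nonneg (convex_Iic 0)
        · exact (hdiff.continuous.sub (continuous_const.mul continuous_id)).continuousOn
        · intro t _
          exact ((hdiff t).sub ((differentiable_id.const_mul m) t)).differentiableWithinAt
        · intro t ht
          rw [interior_Iic] at ht
          have h2 : HasDerivAt (fun t : ℝ => m * t) (m * 1) t := (hasDerivAt_id t).const_mul m
          have hd : HasDerivAt (fun t : ℝ => x t - m * t) (f (x t) - m) t := by
            exact ((hx t).sub h2).congr_deriv (by ring)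
          rw [hd.deriv, sub_nonneg]
          exact hzmin (hKmem t ht.le)
      have := hg (Set.mem_Iic.2 hτ) (Set.self_mem_Iic) hτ
      simp only [mul_zero, sub_zero] at this
      linarith
    set τ0 := min 0 ((ℓ - x 0) / m - 1) with hτ0
    have h1 := hdecay τ0 (min_le_left _ _)
    have h2 : τ0 ≤ (ℓ - x 0) / m - 1 := min_le_right _ _
    have h3 : m * ((ℓ - x 0) / m - 1) = (ℓ - x 0) - m := by field_simp
    nlinarith [hxℓ τ0, mul_le_mul_of_nonneg_left h2 hm0.le]

/-- Any solution of Σ₊' = -½(1-Σ₊²)(2Σ₊-1) with initial value in (-1,1) converges to 1/2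
as τ → +∞; as τ → -∞ it converges to -1 if it starts in (-1,1/2), to 1 if it starts in
(1/2,1), and it stays at 1/2 if it starts there. -/
theorem stmt_11 (x : ℝ → ℝ)
    (hx : ∀ τ, HasDerivAt x (-(1 / 2) * (1 - x τ ^ 2) * (2 * x τ - 1)) τ)
    (h0 : x 0 ∈ Set.Ioo (-1 : ℝ) 1) :
    Tendsto x atTop (nhds (1 / 2)) ∧
    (x 0 ∈ Set.Ioo (-1 : ℝ) (1 / 2) → Tendsto x atBot (nhds (-1))) ∧
    (x 0 ∈ Set.Ioo (1 / 2 : ℝ) 1 → Tendsto x atBot (nhds 1)) ∧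
    (x 0 = 1 / 2 → ∀ τ, x τ = 1 / 2) := by
  set F : ℝ → ℝ := fun y => -(1 / 2) * (1 - y ^ 2) * (2 * y - 1) with hF
  have hxF : ∀ τ, HasDerivAt x (F (x τ)) τ := hx
  have hFc : Continuous F := by fun_prop
  have hxc : Continuous x := Differentiable.continuous (fun τ => (hx τ).differentiableAt)
  -- invariance of (-1,1)
  have hmem : ∀ τ, x τ ∈ Set.Ioo (-1 : ℝ) 1 := by
    have hu : ∀ τ, HasDerivAt (fun t => 1 - x t ^ 2)
        ((2 * x τ ^ 2 - x τ) * (1 - x τ ^ 2)) τ := by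
      intro τ
      have := ((hx τ).pow 2).const_sub 1
      exact this.congr_deriv (by ring)
    have hk : Continuous fun t => 2 * x t ^ 2 - x t := by fun_prop
    have hlin := lin_exp _ _ hk hu
    intro τ
    have h1 : (0:ℝ) < 1 - x 0 ^ 2 := by nlinarith [h0.1, h0.2]
    have h2 : 0 < 1 - x τ ^ 2 := by
      rw [hlin τ]; exact mul_pos h1 (Real.exp_pos _)
    constructor <;> nlinarith
  -- sign of x - 1/2 is invariant
  have hu2 : ∀ τ, HasDerivAt (fun t => x t - 1 / 2)
      ((-(1 - x τ ^ 2)) * (x τ - 1 / 2)) τ := by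
    intro τ
    have := (hx τ).sub_const (1 / 2)
    exact this.congr_deriv (by ring)
  have hk2 : Continuous fun t => -(1 - x t ^ 2) := by fun_prop
  have hlin2 := lin_exp _ _ hk2 hu2
  rcases lt_trichotomy (x 0) (1 / 2) with hc | hc | hc
  · -- x 0 ∈ (-1, 1/2)
    have hlt : ∀ τ, x τ < 1 / 2 := by
      intro τ
      have := hlin2 τ
      nlinarith [Real.exp_pos (∫ s in (0:ℝ)..τ, -(1 - x s ^ 2)), this]
    have hmemA : ∀ τ, x τ ∈ Set.Ioo (-1 : ℝ) (1 / 2) := fun τ => ⟨(hmem τ).1, hlt τ⟩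
    have hposA : ∀ y ∈ Set.Ioo (-1 : ℝ) (1 / 2), 0 < F y := by
      intro y hy
      have h1 := hy.1; have h2 := hy.2
      show (0:ℝ) < -(1 / 2) * (1 - y ^ 2) * (2 * y - 1)
      have hp : 0 < (1 - y ^ 2) * (1 - 2 * y) := mul_pos (by nlinarith) (by linarith)
      nlinarith [hp]
    obtain ⟨hT, hB⟩ := key F x hFc (-1) (1 / 2) hxF hmemA hposA
    refine ⟨hT, fun _ => hB, fun h' => absurd h'.1 (by linarith), fun h' => absurd h' (by linarith)⟩
  · -- x 0 = 1/2 : constant solution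
    have hconst : ∀ τ, x τ = 1 / 2 := by
      intro τ
      have := hlin2 τ
      rw [hc] at this
      simp at this
      linarith
    have : x = fun _ => (1 / 2 : ℝ) := funext hconst
    rw [this]
    exact ⟨tendsto_const_nhds, fun h' => absurd h'.2 (by norm_num),
      fun h' => absurd h'.1 (by norm_num), fun _ τ => rfl⟩
  · -- x 0 ∈ (1/2, 1): time reversal
    have hgt : ∀ τ, 1 / 2 < x τ := by
      intro τ
      have := hlin2 τ
      nlinarith [Real.exp_pos (∫ s in (0:ℝ)..τ, -(1 - x s ^ 2)), this]
    set G : ℝ → ℝ := fun y => -(F y) with hG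
    set y : ℝ → ℝ := fun t => x (-t) with hy
    have hy' : ∀ τ, HasDerivAt y (G (y τ)) τ := by
      intro τ
      have h1 : HasDerivAt (fun t : ℝ => -t) (-1 : ℝ) τ := (hasDerivAt_id τ).neg
      have h2 := (hxF (-τ)).comp τ h1
      have : HasDerivAt y (F (x (-τ)) * (-1)) τ := h2
      simpa [hy, hG, mul_comm] using this
    have hmemC : ∀ τ, y τ ∈ Set.Ioo (1 / 2 : ℝ) 1 := fun τ => ⟨hgt (-τ), (hmem (-τ)).2⟩
    have hposC : ∀ s ∈ Set.Ioo (1 / 2 : ℝ) 1, 0 < G s := by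
      intro s hs
      have h1 := hs.1; have h2 := hs.2
      show (0:ℝ) < -(-(1 / 2) * (1 - s ^ 2) * (2 * s - 1))
      have hp : 0 < (1 - s ^ 2) * (2 * s - 1) := mul_pos (by nlinarith) (by linarith)
      nlinarith [hp]
    obtain ⟨hT, hB⟩ := key G y (by fun_prop) (1 / 2) 1 hy' hmemC hposC
    have hxTop : Tendsto x atTop (nhds (1 / 2)) := by
      have h := hB.comp tendsto_neg_atTop_atBot
      have he : (y ∘ Neg.neg) = x := by funext t; simp [hy]
      rwa [he] at h
    have hxBot : Tendsto x atBot (nhds 1) := by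
      have h := hT.comp tendsto_neg_atBot_atTop
      have he : (y ∘ Neg.neg) = x := by funext t; simp [hy]
      rwa [he] at h
    exact ⟨hxTop, fun h' => absurd h'.2 (by linarith), fun _ => hxBot,
      fun h' => absurd h' (by linarith)⟩
end
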